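/- Let A, B, C, D, F, G, E be matrices over the quaternions (or over ℂ) of compatible sizes. If the matrix equation A X + Y B + C Z₁ D + F Z₂ G = E has a solution (X, Y, Z₁, Z₂), then rank [E A C F; B 0 0 0] = rank [A C F] + rank B. -/

import Mathlib

open Matrix

section Aux

variable {R : Type*} [Field R]

private lemma aux_range_prodMap {M N P Q : Type*} [AddCommGroup M] [AddCommGroup N]
    [AddCommGroup P] [AddCommGroup Q] [Module R M] [Module R N] [Module R P] [Module R Q]
    (f : M →ₗ[R] P) (g : N →ₗ[R] Q) :
    LinearMap.range (f.prodMap g) = (LinearMap.range f).prod (LinearMap.range g) := by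
  ext ⟨a, b⟩
  simp only [LinearMap.mem_range, Submodule.mem_prod, LinearMap.prodMap_apply, Prod.mk.injEq,
    Prod.exists]
  constructor
  · rintro ⟨x, y, h1, h2⟩; exact ⟨⟨x, h1⟩, ⟨y, h2⟩⟩
  · rintro ⟨⟨x, h1⟩, ⟨y, h2⟩⟩; exact ⟨x, y, h1, h2⟩

/-- `p.prod q` is linearly equivalent to `p × q`. -/
private def auxProdEquiv {M N : Type*} [AddCommGroup M] [AddCommGroup N] [Module R M]
    [Module R N] (p : Submodule R M) (q : Submodule R N) : (p.prod q) ≃ₗ[R] p × q where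
  toFun x := (⟨x.1.1, (Submodule.mem_prod.mp x.2).1⟩, ⟨x.1.2, (Submodule.mem_prod.mp x.2).2⟩)
  invFun x := ⟨(x.1.1, x.2.1), Submodule.mem_prod.mpr ⟨x.1.2, x.2.2⟩⟩
  map_add' _ _ := rfl
  map_smul' _ _ := rfl
  left_inv _ := rfl
  right_inv _ := rfl

private lemma aux_finrank_prod {M N : Type*} [AddCommGroup M] [AddCommGroup N] [Module R M]
    [Module R N] [FiniteDimensional R M] [FiniteDimensional R N]
    (p : Submodule R M) (q : Submodule R N) :
    Module.finrank R (p.prod q) = Module.finrank R p + Module.finrank R q := by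
  rw [(auxProdEquiv p q).finrank_eq, Module.finrank_prod]

private lemma aux_rank_fromBlocks_diag {m n p' q' : Type*} [Fintype m] [Fintype n] [Fintype p']
    [Fintype q'] (A : Matrix m n R) (D : Matrix p' q' R) :
    (fromBlocks A 0 0 D).rank = A.rank + D.rank := by
  have key : (fromBlocks A 0 0 D).mulVecLin =
      (LinearEquiv.sumArrowLequivProdArrow m p' R R).symm.toLinearMap ∘ₗ
        (A.mulVecLin.prodMap D.mulVecLin) ∘ₗ
        (LinearEquiv.sumArrowLequivProdArrow n q' R R).toLinearMap := by
    apply LinearMap.ext; intro x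
    funext i
    cases i <;>
      simp [fromBlocks_mulVec, Function.comp_def,
        LinearEquiv.sumArrowLequivProdArrow, Equiv.sumArrowEquivProdArrow]
  rw [Matrix.rank, key, LinearMap.range_comp, LinearMap.range_comp, LinearEquiv.range,
    Submodule.map_top, LinearEquiv.finrank_map_eq, aux_range_prodMap, aux_finrank_prod,
    Matrix.rank, Matrix.rank]

private lemma aux_rank_reindex {m n m' n' : Type*} [Fintype n] [Fintype n'] (e₁ : m ≃ m')
    (e₂ : n ≃ n') (A : Matrix m n R) : (Matrix.reindex e₁ e₂ A).rank = A.rank := by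
  rw [Matrix.rank, Matrix.rank, mulVecLin_reindex, LinearMap.range_comp, LinearMap.range_comp,
    LinearEquiv.range, Submodule.map_top, LinearEquiv.finrank_map_eq]

private lemma aux_rank_fromBlocks_antidiag {m n p' q' : Type*} [Fintype m] [Fintype n] [Fintype p']
    [Fintype q'] (M : Matrix m n R) (B : Matrix p' q' R) :
    (fromBlocks (0 : Matrix m q' R) M B 0).rank = M.rank + B.rank := by
  have h : fromBlocks (0 : Matrix m q' R) M B 0 =
      Matrix.reindex (Equiv.refl (m ⊕ p')) (Equiv.sumComm n q') (fromBlocks M 0 0 B) := by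
    ext i j
    rcases i with i | i <;> rcases j with j | j <;> rfl
  rw [h, aux_rank_reindex, aux_rank_fromBlocks_diag]

end Aux

/-- If A X + Y B + C Z₁ D + F Z₂ G = E is solvable then
rank [E A C F; B 0 0 0] = rank [A C F] + rank B. -/
theorem stmt13 {mm nn p q r s t u : ℕ}
    (E : Matrix (Fin mm) (Fin nn) ℂ)
    (A : Matrix (Fin mm) (Fin p) ℂ) (B : Matrix (Fin q) (Fin nn) ℂ)
    (C : Matrix (Fin mm) (Fin r) ℂ) (D : Matrix (Fin s) (Fin nn) ℂ)
    (F : Matrix (Fin mm) (Fin t) ℂ) (G : Matrix (Fin u) (Fin nn) ℂ)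
    (X : Matrix (Fin p) (Fin nn) ℂ) (Y : Matrix (Fin mm) (Fin q) ℂ)
    (Z₁ : Matrix (Fin r) (Fin s) ℂ) (Z₂ : Matrix (Fin t) (Fin u) ℂ)
    (hsol : A * X + Y * B + C * Z₁ * D + F * Z₂ * G = E) :
    (Matrix.fromBlocks E (Matrix.fromCols A (Matrix.fromCols C F)) B 0).rank
      = (Matrix.fromCols A (Matrix.fromCols C F)).rank + B.rank := by
  classical
  set M : Matrix (Fin mm) (Fin p ⊕ (Fin r ⊕ Fin t)) ℂ :=
    Matrix.fromCols A (Matrix.fromCols C F) with hM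
  set N : Matrix (Fin p ⊕ (Fin r ⊕ Fin t)) (Fin nn) ℂ :=
    Matrix.fromRows X (Matrix.fromRows (Z₁ * D) (Z₂ * G)) with hN
  have hE : E = Y * B + M * N := by
    rw [← hsol, hM, hN, Matrix.fromCols_mul_fromRows, Matrix.fromCols_mul_fromRows,
      Matrix.mul_assoc C, Matrix.mul_assoc F]
    abel
  have key : Matrix.fromBlocks E M B 0 =
      ((Matrix.fromBlocks 1 Y 0 1 : Matrix (Fin mm ⊕ Fin q) (Fin mm ⊕ Fin q) ℂ) * (Matrix.fromBlocks 0 M B 0 : Matrix (Fin mm ⊕ Fin q) (Fin nn ⊕ (Fin p ⊕ (Fin r ⊕ Fin t))) ℂ) : Matrix (Fin mm ⊕ Fin q) (Fin nn ⊕ (Fin p ⊕ (Fin r ⊕ Fin t))) ℂ) * (Matrix.fromBlocks 1 0 N 1 : Matrix (Fin nn ⊕ (Fin p ⊕ (Fin r ⊕ Fin t))) (Fin nn ⊕ (Fin p ⊕ (Fin r ⊕ Fin t))) ℂ) := by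
    rw [Matrix.fromBlocks_multiply, Matrix.fromBlocks_multiply]
    simp only [Matrix.one_mul, Matrix.mul_one, Matrix.zero_mul, Matrix.mul_zero, add_zero,
      zero_add]
    rw [hE]
  have hU : IsUnit (Matrix.fromBlocks (1 : Matrix (Fin mm) (Fin mm) ℂ) Y 0
      (1 : Matrix (Fin q) (Fin q) ℂ)).det := by
    rw [Matrix.det_fromBlocks_zero₂₁, Matrix.det_one, Matrix.det_one, one_mul]
    exact isUnit_one
  have hV : IsUnit (Matrix.fromBlocks (1 : Matrix (Fin nn) (Fin nn) ℂ) 0 N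
      (1 : Matrix (Fin p ⊕ (Fin r ⊕ Fin t)) (Fin p ⊕ (Fin r ⊕ Fin t)) ℂ)).det := by
    rw [Matrix.det_fromBlocks_zero₁₂, Matrix.det_one, Matrix.det_one, one_mul]
    exact isUnit_one
  rw [key, Matrix.rank_mul_eq_left_of_isUnit_det _ _ hV,
    Matrix.rank_mul_eq_right_of_isUnit_det _ _ hU, aux_rank_fromBlocks_antidiag]
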